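/- arXiv:2311.08715 — 3 statements merged into one kernel-verified Lean document; each statement's English description precedes it below -/
import Mathlib

section
/- Let r_c > 0 and R > r_c, let p ∈ ℝ² with ‖p‖ = R, and let X be uniformly distributed on the closed disk of radius r_c centered at the origin. Then for every t with R − r_c ≤ t ≤ R + r_c, the probability that ‖X − p‖ ≤ t equals ∫_{R−r_c}^{t} (2r/(π r_c²)) · arccos((R² + r² − r_c²)/(2 R r)) dr. Equivalently, the distance ‖X − p‖ has probability density f(r) = (2r/(π r_c²)) · arccos((R² + r² − r_c²)/(2 R r)) on the interval (R − r_c, R + r_c) and density 0 elsewhere. (Paper's Lemma 1, case R_{c2u} > r_c.) -/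
open MeasureTheory Real Set

lemma ang_measure (c : ℝ) (hc : 0 < c) :
    volume {θ ∈ Ioo (-π) π | Real.cos θ ≤ -c} = ENNReal.ofReal (2 * Real.arccos c) := by
  rcases le_or_gt 1 c with h1 | h1
  · have hempty : {θ ∈ Ioo (-π) π | Real.cos θ ≤ -c} = ∅ := by
      ext θ
      simp only [mem_setOf_eq, mem_empty_iff_false, iff_false, not_and, mem_Ioo]
      rintro ⟨hl, hr⟩
      have habs : |θ| < π := abs_lt.2 ⟨hl, hr⟩
      have : Real.cos π < Real.cos |θ| := by
        apply Real.strictAntiOn_cos ⟨abs_nonneg θ, le_of_lt habs⟩ ⟨by positivity, le_refl π⟩ habs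
      rw [Real.cos_pi, Real.cos_abs] at this
      intro hle
      nlinarith
    rw [hempty, Real.arccos_eq_zero.2 h1]
    simp
  · set a := Real.arccos (-c) with ha
    have hc1 : -1 ≤ -c := by linarith
    have hc2 : -c ≤ 1 := by linarith
    have hcos : Real.cos a = -c := Real.cos_arccos hc1 hc2
    have ha0 : 0 ≤ a := Real.arccos_nonneg _
    have haπ : a ≤ π := Real.arccos_le_pi _
    have hset : {θ ∈ Ioo (-π) π | Real.cos θ ≤ -c} = Ioo (-π) π \ Ioo (-a) a := by
      ext θ
      simp only [mem_setOf_eq, mem_diff, mem_Ioo, and_congr_right_iff]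
      intro hθ
      rw [← hcos]
      constructor
      · intro hle habs
        have habs' : |θ| < a := abs_lt.2 habs
        have : Real.cos a < Real.cos |θ| :=
          Real.strictAntiOn_cos ⟨abs_nonneg θ, (abs_lt.2 hθ).le.trans (le_refl π) |>.trans (le_refl π)⟩ ⟨ha0, haπ⟩ habs'
        rw [Real.cos_abs] at this
        linarith
      · intro hnot
        have habs : a ≤ |θ| := by
          by_contra hcon
          exact hnot (abs_lt.1 (not_le.1 hcon))
        have h2 : Real.cos |θ| ≤ Real.cos a := by
          rcases eq_or_lt_of_le habs with heq | hlt
          · rw [heq]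
          · exact le_of_lt (Real.strictAntiOn_cos ⟨ha0, haπ⟩
              ⟨abs_nonneg θ, (abs_lt.2 hθ).le⟩ hlt)
        rw [Real.cos_abs] at h2
        exact h2
    rw [hset, measure_diff (Ioo_subset_Ioo (by linarith) haπ) measurableSet_Ioo.nullMeasurableSet
      (by simp), Real.volume_Ioo, Real.volume_Ioo, ← ENNReal.ofReal_sub _ (by linarith)]
    congr 1
    have : Real.arccos (-c) = π - Real.arccos c := Real.arccos_neg c
    rw [ha] at *
    linarith [this]

lemma area_lens (r_c R t : ℝ) (hrc : 0 < r_c) (hR : r_c < R) (ht : R - r_c ≤ t) :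
    volume {z : ℂ | ‖z‖ ≤ t ∧ ‖z + (R:ℂ)‖ ≤ r_c} =
      ENNReal.ofReal (∫ r in (R - r_c)..t,
        2 * r * Real.arccos ((R^2 + r^2 - r_c^2)/(2*R*r))) := by
  have ht0 : 0 < t := lt_of_lt_of_le (by linarith) ht
  set T : Set ℂ := {z : ℂ | ‖z‖ ≤ t ∧ ‖z + (R:ℂ)‖ ≤ r_c} with hTdef
  have hTclosed : IsClosed T := by
    have : T = (Metric.closedBall (0:ℂ) t) ∩ ((· + (R:ℂ)) ⁻¹' Metric.closedBall 0 r_c) := by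
      ext z
      simp [hTdef, Metric.mem_closedBall, dist_eq_norm]
    rw [this]
    exact Metric.isClosed_closedBall.inter (Metric.isClosed_closedBall.preimage (by continuity))
  have hTmeas : MeasurableSet T := hTclosed.measurableSet
  have hfin : volume T ≠ ⊤ := by
    refine ne_top_of_le_ne_top (measure_closedBall_lt_top (x := (0:ℂ)) (r := t)).ne
      (measure_mono ?_)
    intro z hz
    simpa [Metric.mem_closedBall, dist_eq_norm] using hz.1
  set f : ℂ → ℝ := T.indicator (fun _ => (1:ℝ)) with hfdef
  have hstep1 : (∫ q in polarCoord.target, q.1 • f (Complex.polarCoord.symm q))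
      = (volume T).toReal := by
    rw [Complex.integral_comp_polarCoord_symm f]
    exact integral_indicator_one hTmeas
  have hpcont : Continuous (fun q : ℝ × ℝ => Complex.polarCoord.symm q) := by
    simp only [Complex.polarCoord_symm_apply]; fun_prop
  have hFmeas : Measurable (fun q : ℝ × ℝ => q.1 • f (Complex.polarCoord.symm q)) :=
    Measurable.smul measurable_fst
      ((measurable_const.indicator hTmeas).comp hpcont.measurable)
  -- bound for integrability
  have hf01 : ∀ z, f z = 0 ∨ f z = 1 := by
    intro z; by_cases hz : z ∈ T <;> simp [hfdef, Set.indicator_apply, hz]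
  have hbound : ∀ q : ℝ × ℝ, ‖q.1 • f (Complex.polarCoord.symm q)‖
      ≤ (Icc (-t) t ×ˢ (univ : Set ℝ)).indicator (fun _ => t) q := by
    intro q
    by_cases hq : |q.1| ≤ t
    · have hmem : q ∈ Icc (-t) t ×ˢ (univ : Set ℝ) := by
        simp [Set.mem_prod, Set.mem_Icc, abs_le.mp hq]
      rw [Set.indicator_of_mem hmem]
      rcases hf01 (Complex.polarCoord.symm q) with h | h
      · rw [norm_smul, h, norm_zero, mul_zero]; exact ht0.le
      · rw [norm_smul, h, norm_one, mul_one, Real.norm_eq_abs]; exact hq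
    · have hz : Complex.polarCoord.symm q ∉ T := by
        intro hmem
        have := hmem.1
        rw [show ‖Complex.polarCoord.symm q‖ = |q.1| from Complex.norm_polarCoord_symm q] at this
        exact hq this
      rw [hfdef]
      simp only [Set.indicator_of_notMem hz, smul_zero, norm_zero]
      exact Set.indicator_nonneg (fun _ _ => ht0.le) q
  set μpr : Measure (ℝ × ℝ) := (volume.restrict (Ioi 0)).prod (volume.restrict (Ioo (-π) π))
    with hμpr
  have hgint : Integrable ((Icc (-t) t ×ˢ (univ : Set ℝ)).indicator (fun _ => t)) μpr := by
    rw [integrable_indicator_iff (measurableSet_Icc.prod MeasurableSet.univ)]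
    refine (integrableOn_const_iff).mpr (Or.inr ?_)
    rw [hμpr, Measure.prod_prod]
    refine ENNReal.mul_lt_top
      (lt_of_le_of_lt (Measure.restrict_apply_le _ _) (by simp [Real.volume_Icc])) ?_
    rw [Measure.restrict_apply_univ]
    simp [Real.volume_Ioo]
  have hFint : Integrable (fun q : ℝ × ℝ => q.1 • f (Complex.polarCoord.symm q)) μpr :=
    Integrable.mono' hgint hFmeas.aestronglyMeasurable (Filter.Eventually.of_forall hbound)
  have hstep2 : (∫ q in polarCoord.target, q.1 • f (Complex.polarCoord.symm q))
      = ∫ x in Ioi (0:ℝ), ∫ y in Ioo (-π) π, x • f (Complex.polarCoord.symm (x, y)) := by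
    rw [polarCoord_target, Measure.volume_eq_prod, ← Measure.prod_restrict,
      MeasureTheory.integral_prod _ hFint]
  set g0 : ℝ → ℝ := fun r => 2 * r * Real.arccos ((R^2 + r^2 - r_c^2)/(2*R*r)) with hg0
  have hinner : ∀ x ∈ Ioi (0:ℝ),
      (∫ y in Ioo (-π) π, x • f (Complex.polarCoord.symm (x, y)))
        = (Iic t).indicator g0 x := by
    intro x hx
    rw [mem_Ioi] at hx
    set c : ℝ := (R^2 + x^2 - r_c^2)/(2*R*x) with hcdef
    have hc : 0 < c := by
      rw [hcdef]
      exact div_pos (by nlinarith) (by nlinarith)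
    have habs : ∀ y : ℝ, ‖Complex.polarCoord.symm (x, y)‖ = x := by
      intro y
      rw [Complex.norm_polarCoord_symm]
      exact abs_of_pos hx
    have hkey : ∀ y : ℝ, (Complex.polarCoord.symm (x, y) ∈ T) ↔ (x ≤ t ∧ Real.cos y ≤ -c) := by
      intro y
      have hre : (Complex.polarCoord.symm (x, y) + (R:ℂ)).re = x * Real.cos y + R := by
        simp [Complex.polarCoord_symm_apply, Complex.cos_ofReal_re, Complex.sin_ofReal_re]
      have him : (Complex.polarCoord.symm (x, y) + (R:ℂ)).im = x * Real.sin y := by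
        simp [Complex.polarCoord_symm_apply, Complex.cos_ofReal_re, Complex.sin_ofReal_re,
          Complex.cos_ofReal_im, Complex.sin_ofReal_im]
      have hnormsq : ‖Complex.polarCoord.symm (x, y) + (R:ℂ)‖^2
          = x^2 + 2*x*R*Real.cos y + R^2 := by
        rw [Complex.sq_norm, Complex.normSq_apply, hre, him]
        nlinarith [Real.sin_sq_add_cos_sq y]
      have hsecond : (‖Complex.polarCoord.symm (x, y) + (R:ℂ)‖ ≤ r_c) ↔ Real.cos y ≤ -c := by
        have hnc : -c = (r_c^2 - x^2 - R^2)/(2*R*x) := by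
          rw [hcdef, ← neg_div]; ring_nf
        rw [hnc, le_div_iff₀ (by nlinarith : (0:ℝ) < 2*R*x)]
        constructor
        · intro h
          have h2 : ‖Complex.polarCoord.symm (x, y) + (R:ℂ)‖^2 ≤ r_c^2 := by
            nlinarith [norm_nonneg (Complex.polarCoord.symm (x, y) + (R:ℂ))]
          rw [hnormsq] at h2
          nlinarith
        · intro h
          have h2 : ‖Complex.polarCoord.symm (x, y) + (R:ℂ)‖^2 ≤ r_c^2 := by
            rw [hnormsq]; nlinarith
          exact (pow_le_pow_iff_left₀ (norm_nonneg _) hrc.le two_ne_zero).mp h2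
      rw [hTdef]
      simp only [mem_setOf_eq, habs y, hsecond]
    by_cases hxt : x ≤ t
    · have heq : (fun y => x • f (Complex.polarCoord.symm (x, y)))
          = fun y => ({y' : ℝ | Real.cos y' ≤ -c}).indicator (fun _ => x) y := by
        funext y
        by_cases hy : Real.cos y ≤ -c
        · rw [Set.indicator_of_mem (show y ∈ {y' : ℝ | Real.cos y' ≤ -c} from hy), hfdef,
            Set.indicator_of_mem ((hkey y).mpr ⟨hxt, hy⟩), smul_eq_mul, mul_one]
        · rw [Set.indicator_of_notMem (show y ∉ {y' : ℝ | Real.cos y' ≤ -c} from hy), hfdef,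
            Set.indicator_of_notMem (fun hmem => hy ((hkey y).mp hmem).2), smul_zero]
      rw [heq, setIntegral_indicator (by
        exact measurableSet_le (Real.continuous_cos.measurable) measurable_const),
        setIntegral_const]
      have hsep : Ioo (-π) π ∩ {y' : ℝ | Real.cos y' ≤ -c} = {θ ∈ Ioo (-π) π | Real.cos θ ≤ -c} := rfl
      rw [hsep, measureReal_def, ang_measure c hc, Set.indicator_of_mem (show x ∈ Iic t from mem_Iic.mpr hxt),
        ENNReal.toReal_ofReal (mul_nonneg (by norm_num) (Real.arccos_nonneg c))]
      rw [hg0]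
      simp only [smul_eq_mul]
      ring
    · have heq : (fun y => x • f (Complex.polarCoord.symm (x, y))) = fun _ : ℝ => (0:ℝ) := by
        funext y
        rw [hfdef, Set.indicator_of_notMem (fun hmem => hxt ((hkey y).mp hmem).1), smul_zero]
      rw [heq, integral_zero,
        Set.indicator_of_notMem (show x ∉ Iic t from fun hmem => hxt (mem_Iic.mp hmem))]
  have houter : (∫ x in Ioi (0:ℝ), (Iic t).indicator g0 x) = ∫ r in (R - r_c)..t, g0 r := by
    rw [setIntegral_indicator measurableSet_Iic, Ioi_inter_Iic]
    have hcongr : ∀ x ∈ Ioc (0:ℝ) t, g0 x = (Ioc (R - r_c) t).indicator g0 x := by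
      intro x hx
      by_cases hmem : x ∈ Ioc (R - r_c) t
      · rw [Set.indicator_of_mem hmem]
      · rw [Set.indicator_of_notMem hmem]
        have hxle : x ≤ R - r_c := by
          by_contra hcon
          exact hmem ⟨not_le.mp hcon, hx.2⟩
        have hge1 : (1:ℝ) ≤ (R^2 + x^2 - r_c^2)/(2*R*x) := by
          rw [le_div_iff₀ (by nlinarith [hx.1] : (0:ℝ) < 2*R*x)]
          nlinarith [hx.1]
        rw [hg0]
        simp only
        rw [Real.arccos_eq_zero.mpr hge1, mul_zero]
    rw [setIntegral_congr_fun measurableSet_Ioc hcongr,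
      setIntegral_indicator measurableSet_Ioc,
      Set.inter_eq_self_of_subset_right (Ioc_subset_Ioc_left (by linarith)),
      ← intervalIntegral.integral_of_le ht]
  have hval : (volume T).toReal = ∫ r in (R - r_c)..t, g0 r := by
    rw [← hstep1, hstep2, setIntegral_congr_fun measurableSet_Ioi hinner, houter]
  rw [← hval, ENNReal.ofReal_toReal hfin]

/-- Paper's Lemma 1, case `R > r_c`: for a point `X` uniformly distributed on the closed
disk of radius `r_c` centered at the origin of `ℝ²`, and a point `p` at distance `R > r_c`
from the origin, the CDF of the distance `‖X - p‖` on `[R - r_c, R + r_c]` is given by the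
integral of the density `f(r) = (2r/(π r_c²)) · arccos((R² + r² − r_c²)/(2 R r))`. -/
theorem lemma1_case_R_gt_rc (r_c R : ℝ) (hrc : 0 < r_c) (hR : r_c < R)
    (p : EuclideanSpace ℝ (Fin 2)) (hp : ‖p‖ = R)
    (μ : Measure (EuclideanSpace ℝ (Fin 2)))
    (hμ : μ = (ENNReal.ofReal (π * r_c ^ 2))⁻¹ •
      (volume.restrict (Metric.closedBall (0 : EuclideanSpace ℝ (Fin 2)) r_c))) :
    ∀ t : ℝ, R - r_c ≤ t → t ≤ R + r_c →
      μ {x | ‖x - p‖ ≤ t} =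
        ENNReal.ofReal
          (∫ r in (R - r_c)..t,
            (2 * r / (π * r_c ^ 2)) * Real.arccos ((R ^ 2 + r ^ 2 - r_c ^ 2) / (2 * R * r))) := by
  intro t ht1 ht2
  have hR0 : 0 < R := lt_trans hrc hR
  -- build the isometry e with e p = R
  set e0 : EuclideanSpace ℝ (Fin 2) ≃ₗᵢ[ℝ] ℂ := Complex.orthonormalBasisOneI.repr.symm with he0
  set q : ℂ := e0 p with hqdef
  have hqnorm : ‖q‖ = R := by rw [hqdef, e0.norm_map, hp]
  set u : ℂ := (starRingEnd ℂ) q / (R:ℂ) with hudef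
  have hunorm : ‖u‖ = 1 := by
    rw [hudef, norm_div, RCLike.norm_conj, hqnorm, Complex.norm_real, Real.norm_eq_abs,
      abs_of_pos hR0, div_self hR0.ne']
  set e : EuclideanSpace ℝ (Fin 2) ≃ₗᵢ[ℝ] ℂ :=
    e0.trans (rotation ⟨u, mem_sphere_zero_iff_norm.mpr hunorm⟩) with he
  have hep : e p = (R : ℂ) := by
    have hrot : e p = u * q := by
      rw [he]
      simp only [LinearIsometryEquiv.trans_apply, ← hqdef]
      exact rotation_apply _ q
    rw [hrot, hudef, div_mul_eq_mul_div, mul_comm ((starRingEnd ℂ) q) q,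
      Complex.mul_conj, Complex.normSq_eq_norm_sq, hqnorm]
    push_cast
    rw [sq, mul_div_assoc, div_self (show (R:ℂ) ≠ 0 by exact_mod_cast hR0.ne'), mul_one]
  -- measurability of the ball
  have hmeas1 : MeasurableSet {x : EuclideanSpace ℝ (Fin 2) | ‖x - p‖ ≤ t} := by
    have : {x : EuclideanSpace ℝ (Fin 2) | ‖x - p‖ ≤ t} = Metric.closedBall p t := by
      ext x; simp [Metric.mem_closedBall, dist_eq_norm]
    rw [this]; exact Metric.isClosed_closedBall.measurableSet
  -- reduce to a volume statement
  rw [hμ, Measure.smul_apply, Measure.restrict_apply hmeas1, smul_eq_mul]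
  -- identify the set as a preimage
  set S1 : Set ℂ := {z : ℂ | ‖z - (R:ℂ)‖ ≤ t ∧ ‖z‖ ≤ r_c} with hS1
  have hS1closed : IsClosed S1 := by
    have : S1 = ((· - (R:ℂ)) ⁻¹' Metric.closedBall 0 t) ∩ Metric.closedBall 0 r_c := by
      ext z; simp [hS1, Metric.mem_closedBall, dist_eq_norm]
    rw [this]
    exact (Metric.isClosed_closedBall.preimage (by continuity)).inter Metric.isClosed_closedBall
  have hpre : {x : EuclideanSpace ℝ (Fin 2) | ‖x - p‖ ≤ t}
      ∩ Metric.closedBall 0 r_c = e ⁻¹' S1 := by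
    ext x
    simp only [mem_inter_iff, mem_setOf_eq, Metric.mem_closedBall, dist_eq_norm, sub_zero,
      mem_preimage, hS1, ← hep]
    rw [← e.map_sub, e.norm_map, e.norm_map]
  have hvol1 : volume ({x : EuclideanSpace ℝ (Fin 2) | ‖x - p‖ ≤ t}
      ∩ Metric.closedBall 0 r_c) = volume S1 := by
    rw [hpre]
    exact e.measurePreserving.measure_preimage hS1closed.measurableSet.nullMeasurableSet
  -- translate
  have hT1 : ((· + (R:ℂ)) ⁻¹' S1) = {z : ℂ | ‖z‖ ≤ t ∧ ‖z + (R:ℂ)‖ ≤ r_c} := by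
    ext z
    simp [hS1]
  have hvol2 : volume S1 = volume {z : ℂ | ‖z‖ ≤ t ∧ ‖z + (R:ℂ)‖ ≤ r_c} := by
    rw [← hT1]
    exact ((measurePreserving_add_right volume (R:ℂ)).measure_preimage
      hS1closed.measurableSet.nullMeasurableSet).symm
  rw [hvol1, hvol2, area_lens r_c R t hrc hR ht1]
  -- final arithmetic
  have hC : (0:ℝ) < π * r_c ^ 2 := by positivity
  have hint : (∫ r in (R - r_c)..t,
      (2 * r / (π * r_c ^ 2)) * Real.arccos ((R ^ 2 + r ^ 2 - r_c ^ 2) / (2 * R * r)))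
      = (π * r_c ^ 2)⁻¹ * ∫ r in (R - r_c)..t,
        2 * r * Real.arccos ((R^2 + r^2 - r_c^2)/(2*R*r)) := by
    rw [← intervalIntegral.integral_const_mul]
    apply intervalIntegral.integral_congr
    intro r _
    ring
  rw [hint, ENNReal.ofReal_mul (inv_nonneg.mpr hC.le), ENNReal.ofReal_inv_of_pos hC]
end

section
/- For all real numbers r_c, R with 0 < r_c < R, ∫_{R−r_c}^{R+r_c} 2r · arccos((R² + r² − r_c²)/(2 R r)) dr = π r_c². (Normalization of the density in the paper's Lemma 1, case R > r_c: the stated probability density function integrates to 1 over its support.) -/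
open Real

private lemma lemma1_deriv_aux (r_c R : ℝ) (hrc : 0 < r_c) (hR : r_c < R)
    {x : ℝ} (hx : x ∈ Set.Ioo (R - r_c) (R + r_c)) :
    HasDerivAt (fun y : ℝ => y ^ 2 * Real.arccos ((R ^ 2 + y ^ 2 - r_c ^ 2) / (2 * R * y))
        - Real.sqrt (4 * R ^ 2 * y ^ 2 - (y ^ 2 + R ^ 2 - r_c ^ 2) ^ 2) / 2
        + r_c ^ 2 * Real.arcsin ((y ^ 2 - R ^ 2 - r_c ^ 2) / (2 * R * r_c)))
      (2 * x * Real.arccos ((R ^ 2 + x ^ 2 - r_c ^ 2) / (2 * R * x))) x := by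
  obtain ⟨hx1, hx2⟩ := hx
  have hR0 : 0 < R := hrc.trans hR
  have hx0 : 0 < x := lt_of_lt_of_le (sub_pos.mpr hR) hx1.le
  have hden : (0:ℝ) < 2 * R * x := by positivity
  have hQ : 0 < 4 * R ^ 2 * x ^ 2 - (x ^ 2 + R ^ 2 - r_c ^ 2) ^ 2 := by
    nlinarith [mul_pos (sub_pos.mpr hx1) (sub_pos.mpr hx2),
      mul_pos (add_pos hx0 (add_pos hR0 hrc)) (by linarith : (0:ℝ) < x + (R - r_c))]
  set u : ℝ := (R ^ 2 + x ^ 2 - r_c ^ 2) / (2 * R * x) with hu_def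
  set v : ℝ := (x ^ 2 - R ^ 2 - r_c ^ 2) / (2 * R * r_c) with hv_def
  set Q : ℝ := 4 * R ^ 2 * x ^ 2 - (x ^ 2 + R ^ 2 - r_c ^ 2) ^ 2 with hQ_def
  have hu_lt : u < 1 := by
    rw [hu_def, div_lt_one hden]; nlinarith
  have hu_gt : -1 < u := by
    rw [hu_def, lt_div_iff₀ hden]; nlinarith
  have hv_lt : v < 1 := by
    rw [hv_def, div_lt_one (by positivity)]; nlinarith
  have hv_gt : -1 < v := by
    rw [hv_def, lt_div_iff₀ (by positivity)]; nlinarith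
  -- derivative of the inner function of arccos
  have hc : HasDerivAt (fun y : ℝ => R ^ 2 + y ^ 2 - r_c ^ 2) (2 * x) x := by
    simpa using ((hasDerivAt_pow 2 x).const_add (R ^ 2)).sub_const (r_c ^ 2)
  have hd : HasDerivAt (fun y : ℝ => 2 * R * y) (2 * R) x := by
    simpa using (hasDerivAt_id x).const_mul (2 * R)
  have hinner : HasDerivAt (fun y : ℝ => (R ^ 2 + y ^ 2 - r_c ^ 2) / (2 * R * y))
      ((2 * x * (2 * R * x) - (R ^ 2 + x ^ 2 - r_c ^ 2) * (2 * R)) / (2 * R * x) ^ 2) x :=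
    hc.div hd hden.ne'
  have harccos : HasDerivAt (fun y : ℝ => Real.arccos ((R ^ 2 + y ^ 2 - r_c ^ 2) / (2 * R * y)))
      (-(1 / Real.sqrt (1 - u ^ 2)) *
        ((2 * x * (2 * R * x) - (R ^ 2 + x ^ 2 - r_c ^ 2) * (2 * R)) / (2 * R * x) ^ 2)) x := by
    have h := (Real.hasDerivAt_arccos hu_gt.ne' hu_lt.ne).comp x hinner; exact h
  have hA : HasDerivAt (fun y : ℝ => y ^ 2 * Real.arccos ((R ^ 2 + y ^ 2 - r_c ^ 2) / (2 * R * y)))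
      (2 * x * Real.arccos u +
        x ^ 2 * (-(1 / Real.sqrt (1 - u ^ 2)) *
          ((2 * x * (2 * R * x) - (R ^ 2 + x ^ 2 - r_c ^ 2) * (2 * R)) / (2 * R * x) ^ 2))) x := by
    simpa using (hasDerivAt_pow 2 x).fun_mul harccos
  -- derivative of the sqrt part
  have hp : HasDerivAt (fun y : ℝ => 4 * R ^ 2 * y ^ 2 - (y ^ 2 + R ^ 2 - r_c ^ 2) ^ 2)
      (4 * R ^ 2 * (2 * x) - 2 * (x ^ 2 + R ^ 2 - r_c ^ 2) * (2 * x)) x := by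
    have h1 : HasDerivAt (fun y : ℝ => y ^ 2 + R ^ 2 - r_c ^ 2) (2 * x) x := by
      simpa using ((hasDerivAt_pow 2 x).add_const (R ^ 2)).sub_const (r_c ^ 2)
    have h2 := h1.fun_pow 2
    have h3 := (hasDerivAt_pow 2 x).const_mul (4 * R ^ 2)
    refine (h3.fun_sub h2).congr_deriv ?_
    push_cast
    ring
  have hB : HasDerivAt
      (fun y : ℝ => Real.sqrt (4 * R ^ 2 * y ^ 2 - (y ^ 2 + R ^ 2 - r_c ^ 2) ^ 2) / 2)
      ((1 / (2 * Real.sqrt Q) *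
        (4 * R ^ 2 * (2 * x) - 2 * (x ^ 2 + R ^ 2 - r_c ^ 2) * (2 * x))) / 2) x := by
    exact ((Real.hasDerivAt_sqrt hQ.ne').comp x hp).div_const 2
  -- derivative of the arcsin part
  have hv' : HasDerivAt (fun y : ℝ => (y ^ 2 - R ^ 2 - r_c ^ 2) / (2 * R * r_c))
      (2 * x / (2 * R * r_c)) x := by
    have : HasDerivAt (fun y : ℝ => y ^ 2 - R ^ 2 - r_c ^ 2) (2 * x) x := by
      simpa using ((hasDerivAt_pow 2 x).sub_const (R ^ 2)).sub_const (r_c ^ 2)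
    exact this.div_const _
  have hC : HasDerivAt
      (fun y : ℝ => r_c ^ 2 * Real.arcsin ((y ^ 2 - R ^ 2 - r_c ^ 2) / (2 * R * r_c)))
      (r_c ^ 2 * (1 / Real.sqrt (1 - v ^ 2) * (2 * x / (2 * R * r_c)))) x := by
    exact ((Real.hasDerivAt_arcsin hv_gt.ne' hv_lt.ne).comp x hv').const_mul (r_c ^ 2)
  have htotal := (hA.fun_sub hB).fun_add hC
  refine htotal.congr_deriv ?_
  -- now the algebra: express the square roots in terms of √Q
  have hSQ : 0 < Real.sqrt Q := Real.sqrt_pos.mpr hQ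
  have hs1 : Real.sqrt (1 - u ^ 2) = Real.sqrt Q / (2 * R * x) := by
    have h : (Real.sqrt Q / (2 * R * x)) ^ 2 = 1 - u ^ 2 := by
      rw [div_pow, Real.sq_sqrt hQ.le, hu_def, hQ_def]
      field_simp
      ring
    rw [← h, Real.sqrt_sq (by positivity)]
  have hs2 : Real.sqrt (1 - v ^ 2) = Real.sqrt Q / (2 * R * r_c) := by
    have h : (Real.sqrt Q / (2 * R * r_c)) ^ 2 = 1 - v ^ 2 := by
      rw [div_pow, Real.sq_sqrt hQ.le, hv_def, hQ_def]
      field_simp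
      ring
    rw [← h, Real.sqrt_sq (by positivity)]
  rw [hs1, hs2]
  have hx0' : x ≠ 0 := hx0.ne'
  have hR0' : R ≠ 0 := hR0.ne'
  have hrc' : r_c ≠ 0 := hrc.ne'
  field_simp
  ring

/-- Normalization of the density in the paper's Lemma 1, case `R > r_c`:
`∫_{R−r_c}^{R+r_c} 2r · arccos((R² + r² − r_c²)/(2 R r)) dr = π r_c²`. -/
theorem lemma1_density_normalization_R_gt_rc (r_c R : ℝ) (hrc : 0 < r_c) (hR : r_c < R) :
    ∫ r in (R - r_c)..(R + r_c),
      2 * r * Real.arccos ((R ^ 2 + r ^ 2 - r_c ^ 2) / (2 * R * r)) = π * r_c ^ 2 := by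
  have hR0 : 0 < R := hrc.trans hR
  have ha : 0 < R - r_c := sub_pos.mpr hR
  have hab : R - r_c ≤ R + r_c := by linarith
  set F : ℝ → ℝ := fun y => y ^ 2 * Real.arccos ((R ^ 2 + y ^ 2 - r_c ^ 2) / (2 * R * y))
      - Real.sqrt (4 * R ^ 2 * y ^ 2 - (y ^ 2 + R ^ 2 - r_c ^ 2) ^ 2) / 2
      + r_c ^ 2 * Real.arcsin ((y ^ 2 - R ^ 2 - r_c ^ 2) / (2 * R * r_c)) with hF
  have hne : ∀ y ∈ Set.Icc (R - r_c) (R + r_c), 2 * R * y ≠ 0 := by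
    intro y hy
    have : 0 < y := lt_of_lt_of_le ha hy.1
    positivity
  have hcont : ContinuousOn F (Set.Icc (R - r_c) (R + r_c)) := by
    apply ContinuousOn.add
    apply ContinuousOn.sub
    · exact (continuousOn_pow 2).mul
        (Real.continuous_arccos.comp_continuousOn
          (ContinuousOn.div (by fun_prop) (by fun_prop) hne))
    · exact (Real.continuous_sqrt.comp_continuousOn (by fun_prop)).div_const 2
    · exact Continuous.continuousOn
        (continuous_const.mul (Real.continuous_arcsin.comp (by fun_prop)))
  have hcont' : ContinuousOn
      (fun r : ℝ => 2 * r * Real.arccos ((R ^ 2 + r ^ 2 - r_c ^ 2) / (2 * R * r)))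
      (Set.Icc (R - r_c) (R + r_c)) := by
    exact (continuousOn_const.mul continuousOn_id).mul
      (Real.continuous_arccos.comp_continuousOn
        (ContinuousOn.div (by fun_prop) (by fun_prop) hne))
  have key : ∫ r in (R - r_c)..(R + r_c),
      2 * r * Real.arccos ((R ^ 2 + r ^ 2 - r_c ^ 2) / (2 * R * r))
      = F (R + r_c) - F (R - r_c) := by
    apply intervalIntegral.integral_eq_sub_of_hasDerivAt_of_le hab hcont
    · intro x hx
      exact lemma1_deriv_aux r_c R hrc hR hx
    · exact (hcont'.mono (by rw [Set.uIcc_of_le hab])).intervalIntegrable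
  rw [key, hF]
  have e1 : (R ^ 2 + (R + r_c) ^ 2 - r_c ^ 2) / (2 * R * (R + r_c)) = 1 := by
    rw [div_eq_one_iff_eq (by positivity)]; ring
  have e2 : (R ^ 2 + (R - r_c) ^ 2 - r_c ^ 2) / (2 * R * (R - r_c)) = 1 := by
    rw [div_eq_one_iff_eq (by positivity)]; ring
  have e3 : 4 * R ^ 2 * (R + r_c) ^ 2 - ((R + r_c) ^ 2 + R ^ 2 - r_c ^ 2) ^ 2 = 0 := by ring
  have e4 : 4 * R ^ 2 * (R - r_c) ^ 2 - ((R - r_c) ^ 2 + R ^ 2 - r_c ^ 2) ^ 2 = 0 := by ring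
  have e5 : ((R + r_c) ^ 2 - R ^ 2 - r_c ^ 2) / (2 * R * r_c) = 1 := by
    rw [div_eq_one_iff_eq (by positivity)]; ring
  have e6 : ((R - r_c) ^ 2 - R ^ 2 - r_c ^ 2) / (2 * R * r_c) = -1 := by
    rw [div_eq_iff (by positivity)]; ring
  simp only [e1, e2, e3, e4, e5, e6, Real.arccos_one, Real.arcsin_one, Real.arcsin_neg_one,
    Real.sqrt_zero]
  ring
end

section
/- For all real numbers r_c, R with 0 < R ≤ r_c, ∫_{r_c−R}^{R+r_c} 2r · arccos((R² + r² − r_c²)/(2 R r)) dr = π r_c² − π (r_c − R)². (Normalization of the density in the paper's Lemma 1, case R ≤ r_c: together with the inner part ∫_0^{r_c−R} (2r/r_c²) dr = (r_c−R)²/r_c², the stated piecewise density integrates to 1.) -/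
open Real

lemma aux_deriv (r_c R r : ℝ) (hR0 : 0 < R) (hR : R ≤ r_c)
    (hr : r ∈ Set.Ioo (r_c - R) (R + r_c)) :
    HasDerivAt (fun t : ℝ =>
      t ^ 2 * Real.arccos ((R ^ 2 + t ^ 2 - r_c ^ 2) / (2 * R * t))
        - Real.sqrt (4 * R ^ 2 * t ^ 2 - (R ^ 2 + t ^ 2 - r_c ^ 2) ^ 2) / 2
        + r_c ^ 2 * Real.arcsin ((t ^ 2 - R ^ 2 - r_c ^ 2) / (2 * R * r_c)))
      (2 * r * Real.arccos ((R ^ 2 + r ^ 2 - r_c ^ 2) / (2 * R * r))) r := by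
  obtain ⟨hra, hrb⟩ := hr
  have hrc0 : 0 < r_c := lt_of_lt_of_le hR0 hR
  have hr0 : 0 < r := lt_of_le_of_lt (by linarith) hra
  have h2Rr : (0:ℝ) < 2 * R * r := by positivity
  have h2Rrc : (0:ℝ) < 2 * R * r_c := by positivity
  have hf1 : 0 < r_c - (r - R) := by linarith
  have hf2 : 0 < r_c + (r - R) := by linarith
  have hf3 : 0 < r + R - r_c := by linarith
  have hf4 : 0 < r + R + r_c := by linarith
  have hg0 : 0 < 4 * R ^ 2 * r ^ 2 - (R ^ 2 + r ^ 2 - r_c ^ 2) ^ 2 := by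
    nlinarith [mul_pos (mul_pos (mul_pos hf1 hf2) hf3) hf4]
  have hu1 : (R ^ 2 + r ^ 2 - r_c ^ 2) / (2 * R * r) < 1 := by
    rw [div_lt_one h2Rr]; nlinarith [mul_pos hf1 hf2]
  have hu2 : (-1:ℝ) < (R ^ 2 + r ^ 2 - r_c ^ 2) / (2 * R * r) := by
    rw [lt_div_iff₀ h2Rr]; nlinarith [mul_pos hf3 hf4]
  have hv1 : (r ^ 2 - R ^ 2 - r_c ^ 2) / (2 * R * r_c) < 1 := by
    rw [div_lt_one h2Rrc]; nlinarith
  have hv2 : (-1:ℝ) < (r ^ 2 - R ^ 2 - r_c ^ 2) / (2 * R * r_c) := by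
    rw [lt_div_iff₀ h2Rrc]
    nlinarith [mul_pos (sub_pos.2 hra) (show (0:ℝ) < r + (r_c - R) by linarith)]
  have hX : HasDerivAt (fun t : ℝ => R ^ 2 + t ^ 2 - r_c ^ 2) (2 * r) r := by
    simpa using ((hasDerivAt_pow 2 r).const_add (R ^ 2)).sub_const (r_c ^ 2)
  have hden : HasDerivAt (fun t : ℝ => 2 * R * t) (2 * R) r := by
    simpa using (hasDerivAt_id r).const_mul (2 * R)
  have hu : HasDerivAt (fun t : ℝ => (R ^ 2 + t ^ 2 - r_c ^ 2) / (2 * R * t))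
      ((2 * r * (2 * R * r) - (R ^ 2 + r ^ 2 - r_c ^ 2) * (2 * R)) / (2 * R * r) ^ 2) r :=
    hX.div hden h2Rr.ne'
  have harccos := (Real.hasDerivAt_arccos hu2.ne' hu1.ne).comp r hu
  have hA := (hasDerivAt_pow 2 r).mul harccos
  have hg : HasDerivAt (fun t : ℝ => 4 * R ^ 2 * t ^ 2 - (R ^ 2 + t ^ 2 - r_c ^ 2) ^ 2)
      (4 * R ^ 2 * (2 * r) - 2 * (R ^ 2 + r ^ 2 - r_c ^ 2) * (2 * r)) r := by
    have h1 := (hasDerivAt_pow 2 r).const_mul (4 * R ^ 2)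
    have h2 := hX.pow 2
    have := h1.sub h2
    refine this.congr_deriv ?_
    push_cast; ring
  have hB := (hg.sqrt hg0.ne').div_const 2
  have hv : HasDerivAt (fun t : ℝ => (t ^ 2 - R ^ 2 - r_c ^ 2) / (2 * R * r_c))
      (2 * r / (2 * R * r_c)) r := by
    simpa using (((hasDerivAt_pow 2 r).sub_const (R ^ 2)).sub_const (r_c ^ 2)).div_const
      (2 * R * r_c)
  have harcsin := (Real.hasDerivAt_arcsin hv2.ne' hv1.ne).comp r hv
  have hC := harcsin.const_mul (r_c ^ 2)
  have hF := (hA.sub hB).add hC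
  refine hF.congr_deriv ?_
  have hS0 : Real.sqrt (4 * R ^ 2 * r ^ 2 - (R ^ 2 + r ^ 2 - r_c ^ 2) ^ 2) ≠ 0 :=
    (Real.sqrt_pos.2 hg0).ne'
  have hs1 : Real.sqrt (1 - ((R ^ 2 + r ^ 2 - r_c ^ 2) / (2 * R * r)) ^ 2)
      = Real.sqrt (4 * R ^ 2 * r ^ 2 - (R ^ 2 + r ^ 2 - r_c ^ 2) ^ 2) / (2 * R * r) := by
    rw [show 1 - ((R ^ 2 + r ^ 2 - r_c ^ 2) / (2 * R * r)) ^ 2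
        = (4 * R ^ 2 * r ^ 2 - (R ^ 2 + r ^ 2 - r_c ^ 2) ^ 2) / (2 * R * r) ^ 2 by
      field_simp; ring]
    rw [Real.sqrt_div hg0.le, Real.sqrt_sq h2Rr.le]
  have hs2 : Real.sqrt (1 - ((r ^ 2 - R ^ 2 - r_c ^ 2) / (2 * R * r_c)) ^ 2)
      = Real.sqrt (4 * R ^ 2 * r ^ 2 - (R ^ 2 + r ^ 2 - r_c ^ 2) ^ 2) / (2 * R * r_c) := by
    rw [show 1 - ((r ^ 2 - R ^ 2 - r_c ^ 2) / (2 * R * r_c)) ^ 2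
        = (4 * R ^ 2 * r ^ 2 - (R ^ 2 + r ^ 2 - r_c ^ 2) ^ 2) / (2 * R * r_c) ^ 2 by
      field_simp; ring]
    rw [Real.sqrt_div hg0.le, Real.sqrt_sq h2Rrc.le]
  rw [hs1, hs2]
  simp only [Function.comp_apply]
  push_cast
  field_simp
  ring

/-- Normalization of the density in the paper's Lemma 1, case `R ≤ r_c`:
`∫_{r_c−R}^{R+r_c} 2r · arccos((R² + r² − r_c²)/(2 R r)) dr = π r_c² − π (r_c − R)²`. -/
theorem lemma1_density_normalization_R_le_rc (r_c R : ℝ) (hR0 : 0 < R) (hR : R ≤ r_c) :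
    ∫ r in (r_c - R)..(R + r_c),
      2 * r * Real.arccos ((R ^ 2 + r ^ 2 - r_c ^ 2) / (2 * R * r)) =
      π * r_c ^ 2 - π * (r_c - R) ^ 2 := by
  have hrc0 : 0 < r_c := lt_of_lt_of_le hR0 hR
  have hab : r_c - R < R + r_c := by linarith
  have hb0 : (0:ℝ) < R + r_c := by linarith
  have h2Rrc : (0:ℝ) < 2 * R * r_c := by positivity
  -- Integrability
  have hint : IntervalIntegrable
      (fun r => 2 * r * Real.arccos ((R ^ 2 + r ^ 2 - r_c ^ 2) / (2 * R * r)))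
      MeasureTheory.volume (r_c - R) (R + r_c) := by
    rcases eq_or_lt_of_le hR with hE | hlt
    · subst hE
      have hrw : ∀ t : ℝ, (R ^ 2 + t ^ 2 - R ^ 2) / (2 * R * t) = t / (2 * R) := by
        intro t
        rcases eq_or_ne t 0 with h | h
        · simp [h]
        · field_simp; ring
      simp only [hrw]
      exact Continuous.intervalIntegrable
        ((continuous_const.mul continuous_id).mul
          (Real.continuous_arccos.comp (continuous_id.div_const _))) _ _
    · have ha0 : 0 < r_c - R := by linarith
      apply ContinuousOn.intervalIntegrable
      rw [Set.uIcc_of_le hab.le]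
      apply ContinuousOn.mul (by fun_prop)
      apply Real.continuous_arccos.comp_continuousOn
      apply ContinuousOn.div (by fun_prop) (by fun_prop)
      intro t ht
      have h1 : 0 < t := lt_of_lt_of_le ha0 ht.1
      positivity
  -- limit at the left endpoint
  have TA : Filter.Tendsto (fun t : ℝ => t ^ 2 * Real.arccos ((R ^ 2 + t ^ 2 - r_c ^ 2) / (2 * R * t)))
      (nhdsWithin (r_c - R) (Set.Ioi (r_c - R))) (nhds (π * (r_c - R) ^ 2)) := by
    rcases eq_or_lt_of_le hR with hE | hlt
    · subst hE
      rw [sub_self]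
      have hπ : π * (0:ℝ) ^ 2 = 0 := by norm_num
      rw [hπ]
      have hg : Filter.Tendsto (fun t : ℝ => t ^ 2 * π) (nhdsWithin 0 (Set.Ioi (0:ℝ))) (nhds 0) := by
        have hc : Continuous fun t : ℝ => t ^ 2 * π := by fun_prop
        simpa using (hc.tendsto 0).mono_left nhdsWithin_le_nhds
      exact squeeze_zero
        (fun t => mul_nonneg (sq_nonneg t) (Real.arccos_nonneg _))
        (fun t => mul_le_mul_of_nonneg_left (Real.arccos_le_pi _) (sq_nonneg t)) hg
    · have ha0 : 0 < r_c - R := by linarith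
      have h2Ra : (2 * R * (r_c - R)) ≠ 0 := by positivity
      have hcont : ContinuousAt
          (fun t : ℝ => t ^ 2 * Real.arccos ((R ^ 2 + t ^ 2 - r_c ^ 2) / (2 * R * t)))
          (r_c - R) := by
        apply ContinuousAt.mul (by fun_prop)
        apply Real.continuous_arccos.continuousAt.comp
        exact ContinuousAt.div (by fun_prop) (by fun_prop) h2Ra
      have hval : (R ^ 2 + (r_c - R) ^ 2 - r_c ^ 2) / (2 * R * (r_c - R)) = -1 := by
        rw [div_eq_iff h2Ra]; ring
      have h := (hcont.continuousWithinAt (s := Set.Ioi (r_c - R))).tendsto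
      convert h using 2
      rw [hval, Real.arccos_neg_one]; ring
  have TB : Filter.Tendsto
      (fun t : ℝ => Real.sqrt (4 * R ^ 2 * t ^ 2 - (R ^ 2 + t ^ 2 - r_c ^ 2) ^ 2) / 2)
      (nhdsWithin (r_c - R) (Set.Ioi (r_c - R))) (nhds 0) := by
    have hc : Continuous (fun t : ℝ =>
        Real.sqrt (4 * R ^ 2 * t ^ 2 - (R ^ 2 + t ^ 2 - r_c ^ 2) ^ 2) / 2) := by fun_prop
    have h := (hc.tendsto (r_c - R)).mono_left (nhdsWithin_le_nhds (s := Set.Ioi (r_c - R)))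
    have hz : 4 * R ^ 2 * (r_c - R) ^ 2 - (R ^ 2 + (r_c - R) ^ 2 - r_c ^ 2) ^ 2 = 0 := by ring
    convert h using 2
    rw [hz, Real.sqrt_zero]; norm_num
  have TC : Filter.Tendsto
      (fun t : ℝ => r_c ^ 2 * Real.arcsin ((t ^ 2 - R ^ 2 - r_c ^ 2) / (2 * R * r_c)))
      (nhdsWithin (r_c - R) (Set.Ioi (r_c - R))) (nhds (r_c ^ 2 * (-(π / 2)))) := by
    have hc : Continuous (fun t : ℝ =>
        r_c ^ 2 * Real.arcsin ((t ^ 2 - R ^ 2 - r_c ^ 2) / (2 * R * r_c))) := by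
      exact continuous_const.mul (Real.continuous_arcsin.comp (by fun_prop))
    have h := (hc.tendsto (r_c - R)).mono_left (nhdsWithin_le_nhds (s := Set.Ioi (r_c - R)))
    have hv : ((r_c - R) ^ 2 - R ^ 2 - r_c ^ 2) / (2 * R * r_c) = -1 := by
      rw [div_eq_iff h2Rrc.ne']; ring
    convert h using 2
    rw [hv, Real.arcsin_neg_one]
  have Ta := (TA.sub TB).add TC
  -- limit at the right endpoint
  have h2Rb : (2 * R * (R + r_c)) ≠ 0 := by positivity
  have hcontb : ContinuousAt (fun t : ℝ =>
      t ^ 2 * Real.arccos ((R ^ 2 + t ^ 2 - r_c ^ 2) / (2 * R * t))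
        - Real.sqrt (4 * R ^ 2 * t ^ 2 - (R ^ 2 + t ^ 2 - r_c ^ 2) ^ 2) / 2
        + r_c ^ 2 * Real.arcsin ((t ^ 2 - R ^ 2 - r_c ^ 2) / (2 * R * r_c))) (R + r_c) := by
    apply ContinuousAt.add
    apply ContinuousAt.sub
    · apply ContinuousAt.mul (by fun_prop)
      apply Real.continuous_arccos.continuousAt.comp
      exact ContinuousAt.div (by fun_prop) (by fun_prop) h2Rb
    · fun_prop
    · exact (continuous_const.mul (Real.continuous_arcsin.comp (by fun_prop))).continuousAt
  have hub : (R ^ 2 + (R + r_c) ^ 2 - r_c ^ 2) / (2 * R * (R + r_c)) = 1 := by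
    rw [div_eq_one_iff_eq h2Rb]; ring
  have hgb : 4 * R ^ 2 * (R + r_c) ^ 2 - (R ^ 2 + (R + r_c) ^ 2 - r_c ^ 2) ^ 2 = 0 := by ring
  have hvb : ((R + r_c) ^ 2 - R ^ 2 - r_c ^ 2) / (2 * R * r_c) = 1 := by
    rw [div_eq_one_iff_eq h2Rrc.ne']; ring
  have Tb : Filter.Tendsto (fun t : ℝ =>
      t ^ 2 * Real.arccos ((R ^ 2 + t ^ 2 - r_c ^ 2) / (2 * R * t))
        - Real.sqrt (4 * R ^ 2 * t ^ 2 - (R ^ 2 + t ^ 2 - r_c ^ 2) ^ 2) / 2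
        + r_c ^ 2 * Real.arcsin ((t ^ 2 - R ^ 2 - r_c ^ 2) / (2 * R * r_c)))
      (nhdsWithin (R + r_c) (Set.Iio (R + r_c))) (nhds (r_c ^ 2 * (π / 2))) := by
    have h := (hcontb.continuousWithinAt (s := Set.Iio (R + r_c))).tendsto
    convert h using 2
    rw [hub, hgb, hvb, Real.arccos_one, Real.arcsin_one, Real.sqrt_zero]; ring
  have key := intervalIntegral.integral_eq_sub_of_hasDerivAt_of_tendsto hab
    (fun x hx => aux_deriv r_c R x hR0 hR hx) hint Ta Tb
  rw [key]; ring
end
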